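/- Let α, γ ∈ (0,1) and let S be the rectangle exchange S(x,y) = ({x+α}, y) for x ∈ [0,1−α), S(x,y) = ({x+α}, {y+γ}) for x ∈ [1−α,1). Let R_θ be the rotation of the torus [0,1)² by the vector θ = (α, αγ), and define Φ : [0,1)² → [0,1)² by Φ(x,y) = (x, {y − γx}). Then Φ ∘ R_θ = S ∘ Φ, and consequently Φ ∘ R_θ^k = S^k ∘ Φ for every k ≥ 1. -/

import Mathlib

open scoped Classical

/-- The rectangle exchange transformation on `[0,1)²` with parameters `α, γ`. -/
noncomputable def rectS (α γ : ℝ) (p : ℝ × ℝ) : ℝ × ℝ :=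
  if p.1 < 1 - α then (Int.fract (p.1 + α), p.2)
  else (Int.fract (p.1 + α), Int.fract (p.2 + γ))

/-- The rotation of the torus `[0,1)²` by the vector `θ = (α, αγ)`. -/
noncomputable def rot (α γ : ℝ) (p : ℝ × ℝ) : ℝ × ℝ :=
  (Int.fract (p.1 + α), Int.fract (p.2 + α * γ))

/-- The conjugating map `Φ(x,y) = (x, {y - γx})`. -/
noncomputable def Phi (γ : ℝ) (p : ℝ × ℝ) : ℝ × ℝ :=
  (p.1, Int.fract (p.2 - γ * p.1))

lemma fract_sub_left (a b : ℝ) : Int.fract (Int.fract a - b) = Int.fract (a - b) := by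
  have h : Int.fract a - b = a - b - (⌊a⌋ : ℤ) := by rw [Int.fract]; push_cast; ring
  rw [h, Int.fract_sub_intCast]

lemma fract_add_left (a b : ℝ) : Int.fract (Int.fract a + b) = Int.fract (a + b) := by
  have h : Int.fract a + b = a + b - (⌊a⌋ : ℤ) := by rw [Int.fract]; push_cast; ring
  rw [h, Int.fract_sub_intCast]

lemma key (α γ : ℝ) (hα : α ∈ Set.Ioo (0:ℝ) 1)
    (p : ℝ × ℝ) (hp : p ∈ Set.Ico (0:ℝ) 1 ×ˢ Set.Ico (0:ℝ) 1) :
    Phi γ (rot α γ p) = rectS α γ (Phi γ p) := by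
  obtain ⟨⟨hx0, hx1⟩, hy⟩ := hp
  simp only [Phi, rot, rectS]
  by_cases h : p.1 < 1 - α
  · simp only [h, ↓reduceIte]
    have hfr : Int.fract (p.1 + α) = p.1 + α := by
      rw [Int.fract_eq_self]
      constructor <;> nlinarith [hα.1, hα.2]
    rw [hfr]
    refine Prod.ext rfl ?_
    simp only
    rw [fract_sub_left]
    congr 1
    ring
  · simp only [h, ↓reduceIte]
    push_neg at h
    have hfr : Int.fract (p.1 + α) = p.1 + α - 1 := by
      have : Int.fract (p.1 + α) = Int.fract (p.1 + α - 1) := by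
        rw [show p.1 + α - 1 = p.1 + α - (1:ℤ) by push_cast; ring, Int.fract_sub_intCast]
      rw [this, Int.fract_eq_self]
      constructor <;> nlinarith [hα.1, hα.2]
    rw [hfr]
    refine Prod.ext rfl ?_
    simp only
    rw [fract_sub_left, fract_add_left]
    congr 1
    ring

lemma rot_mem (α γ : ℝ) (p : ℝ × ℝ) :
    rot α γ p ∈ Set.Ico (0:ℝ) 1 ×ˢ Set.Ico (0:ℝ) 1 := by
  exact ⟨⟨Int.fract_nonneg _, Int.fract_lt_one _⟩, ⟨Int.fract_nonneg _, Int.fract_lt_one _⟩⟩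

theorem stmt_10 (α γ : ℝ) (hα : α ∈ Set.Ioo (0:ℝ) 1) (hγ : γ ∈ Set.Ioo (0:ℝ) 1)
    (p : ℝ × ℝ) (hp : p ∈ Set.Ico (0:ℝ) 1 ×ˢ Set.Ico (0:ℝ) 1) :
    Phi γ (rot α γ p) = rectS α γ (Phi γ p) ∧
    ∀ k : ℕ, 1 ≤ k → Phi γ ((rot α γ)^[k] p) = (rectS α γ)^[k] (Phi γ p) := by
  have main : ∀ k : ℕ, Phi γ ((rot α γ)^[k] p) = (rectS α γ)^[k] (Phi γ p) := by
    intro k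
    induction k with
    | zero => simp
    | succ n ih =>
      have hmem : (rot α γ)^[n] p ∈ Set.Ico (0:ℝ) 1 ×ˢ Set.Ico (0:ℝ) 1 := by
        cases n with
        | zero => exact hp
        | succ m => rw [Function.iterate_succ_apply']; exact rot_mem α γ _
      rw [Function.iterate_succ_apply', Function.iterate_succ_apply', key α γ hα _ hmem, ih]
  exact ⟨by simpa using main 1, fun k _ => main k⟩
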